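/- For a finite relational language there exist, for each m ∈ ℕ, only finitely many first-order formulas of quantifier rank at most m up to logical equivalence; consequently, for every σ-structure 𝔄 there is a single sentence χ of quantifier rank m such that for all σ-structures 𝔅, 𝔅 ⊨ χ if and only if 𝔄 ≡_m 𝔅. -/

import Mathlib

open FirstOrder Language Structure Filter Set Cardinal

universe u v w x

namespace UP

variable {L : FirstOrder.Language.{u, v}}

/-- Quantifier rank of a bounded formula. -/
def qr {L : FirstOrder.Language} {α : Type*} : ∀ {n : ℕ}, L.BoundedFormula α n → ℕ
  | _, .falsum => 0
  | _, .equal _ _ => 0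
  | _, .rel _ _ => 0
  | _, .imp f g => max (qr f) (qr g)
  | _, .all f => qr f + 1

/-- `m`-equivalence: agreement on all sentences of quantifier rank at most `m`. -/
def MEquiv (L : FirstOrder.Language) (m : ℕ) (M : Type*) (N : Type*)
    [L.Structure M] [L.Structure N] : Prop :=
  ∀ φ : L.Sentence, qr φ ≤ m → (M ⊨ φ ↔ N ⊨ φ)

/-- The Gaifman graph of a structure. -/
def gaifman (L : FirstOrder.Language) (M : Type*) [L.Structure M] : SimpleGraph M where
  Adj a b := a ≠ b ∧ ∃ (n : ℕ) (r : L.Relations n) (x : Fin n → M),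
      RelMap r x ∧ a ∈ Set.range x ∧ b ∈ Set.range x
  symm := ⟨fun a b ⟨h, n, r, x, h1, h2, h3⟩ => ⟨h.symm, n, r, x, h1, h3, h2⟩⟩
  loopless := ⟨fun a ⟨h, _⟩ => h rfl⟩

/-- The `m`-ball around `a` with respect to Gaifman distance. -/
def ball (L : FirstOrder.Language) (M : Type*) [L.Structure M] (m : ℕ) (a : M) : Set M :=
  {b | ∃ w : (gaifman L M).Walk a b, w.length ≤ m}

/-- The connected component of `a` in the Gaifman graph. -/
def component (L : FirstOrder.Language) (M : Type*) [L.Structure M] (a : M) : Set M :=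
  {b | (gaifman L M).Reachable a b}

theorem self_mem_ball {L : FirstOrder.Language.{u, v}} {M : Type*} [L.Structure M] (m : ℕ) (a : M) : a ∈ ball L M m a :=
  ⟨SimpleGraph.Walk.nil, by simp⟩

theorem self_mem_component {M : Type*} [L.Structure M] (a : M) : a ∈ component L M a :=
  SimpleGraph.Reachable.refl a

/-- Induced structure on any subset (for relational languages). -/
instance subStructure [L.IsRelational] {M : Type*} [L.Structure M] (s : Set M) :
    L.Structure s where
  funMap := fun f _ => isEmptyElim f
  RelMap := fun r x => RelMap r fun i => (x i : M)

/-- `a` has the `m`-ball type given by the pointed structure `(P, p)`. -/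
def HasBallType (L : FirstOrder.Language.{u, v}) [L.IsRelational] {M : Type u}
    [L.Structure M] (m : ℕ) (a : M) (P : Type w) [L.Structure P] (p : P) : Prop :=
  ∃ g : ↥(ball L M m a) ≃[L] P, g ⟨a, self_mem_ball m a⟩ = p

/-- The number of elements of `M` of `m`-ball type `(P, p)`, as an extended natural number. -/
noncomputable def ballTypeCount (L : FirstOrder.Language.{u, v}) [L.IsRelational]
    (M : Type u) [L.Structure M] (m : ℕ) (P : Type w) [L.Structure P] (p : P) : ℕ∞ :=
  {a : M | HasBallType L m a P p}.encard

/-- A Hanf sequence of `σ`-structures. -/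
def IsHanfSequence (L : FirstOrder.Language.{u, v}) [L.IsRelational]
    (A : ℕ → Type u) [∀ i, L.Structure (A i)] : Prop :=
  (∀ i, #(A i) ≤ 2 ^ Cardinal.aleph0) ∧
  (∀ m : ℕ, ∃ e : ℕ, ∀ (i : ℕ) (a : A i), (ball L (A i) m a).encard ≤ e) ∧
  (∀ (m : ℕ) (P : Type u) (_ : L.Structure P) (p : P),
     (∃ c : ℕ, ∀ᶠ i in Filter.atTop, ballTypeCount L (A i) m P p = c) ∨
     (∀ c : ℕ, ∀ᶠ i in Filter.atTop, (c : ℕ∞) < ballTypeCount L (A i) m P p))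

/-- A back-and-forth system between `M` and `N`, as a set of pairs of finite tuples. -/
def IsBFSystem (L : FirstOrder.Language) (M : Type*) (N : Type*)
    [L.Structure M] [L.Structure N]
    (S : Set (Σ n : ℕ, (Fin n → M) × (Fin n → N))) : Prop :=
  (∀ q ∈ S, (∀ i j, q.2.1 i = q.2.1 j ↔ q.2.2 i = q.2.2 j) ∧
    ∀ (k : ℕ) (r : L.Relations k) (f : Fin k → Fin q.1),
      (RelMap r (q.2.1 ∘ f) ↔ RelMap r (q.2.2 ∘ f))) ∧
  (∀ q ∈ S, ∀ a : M, ∃ b : N, (⟨q.1 + 1, Fin.snoc q.2.1 a, Fin.snoc q.2.2 b⟩ :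
      Σ n : ℕ, (Fin n → M) × (Fin n → N)) ∈ S) ∧
  (∀ q ∈ S, ∀ b : N, ∃ a : M, (⟨q.1 + 1, Fin.snoc q.2.1 a, Fin.snoc q.2.2 b⟩ :
      Σ n : ℕ, (Fin n → M) × (Fin n → N)) ∈ S)

/-- Two structures are partially isomorphic (back-and-forth equivalent). -/
def PartiallyIsomorphic (L : FirstOrder.Language) (M : Type*) (N : Type*)
    [L.Structure M] [L.Structure N] : Prop :=
  ∃ S, IsBFSystem L M N S ∧
    (⟨0, fun i => i.elim0, fun i => i.elim0⟩ : Σ n : ℕ, (Fin n → M) × (Fin n → N)) ∈ S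

/-- Two pointed structures are partially isomorphic. -/
def PointedPartiallyIsomorphic (L : FirstOrder.Language) (M : Type*) (N : Type*)
    [L.Structure M] [L.Structure N] (a : M) (b : N) : Prop :=
  ∃ S, IsBFSystem L M N S ∧
    (⟨1, fun _ => a, fun _ => b⟩ : Σ n : ℕ, (Fin n → M) × (Fin n → N)) ∈ S

/-- `κ`-saturation: every finitely realized type over fewer than `κ` parameters is realized. -/
def SaturatedAt (L : FirstOrder.Language) (κ : Cardinal.{0}) (M : Type*) [L.Structure M] : Prop :=
  ∀ (α : Type) (_ : #α < κ) (v : α → M) (Φ : Set (L.Formula (α ⊕ Unit))),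
    (∀ F : Finset (L.Formula (α ⊕ Unit)), ↑F ⊆ Φ →
      ∃ x : M, ∀ φ ∈ F, φ.Realize (Sum.elim v fun _ => x)) →
    ∃ x : M, ∀ φ ∈ Φ, φ.Realize (Sum.elim v fun _ => x)

end UP

open UP

namespace UPAux

open UP FirstOrder Language Structure

variable {L : FirstOrder.Language.{u, v}} {α : Type*} {n : ℕ}

lemma qr_imp (f g : L.BoundedFormula α n) : qr (f.imp g) = max (qr f) (qr g) := rfl
lemma qr_bot : qr (⊥ : L.BoundedFormula α n) = 0 := rfl
lemma qr_all (f : L.BoundedFormula α (n+1)) : qr f.all = qr f + 1 := rfl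
lemma qr_not (f : L.BoundedFormula α n) : qr f.not = qr f := by
  show max (qr f) (qr (⊥ : L.BoundedFormula α n)) = qr f
  simp [qr_bot]
lemma qr_top : qr (⊤ : L.BoundedFormula α n) = 0 := rfl
lemma qr_inf (f g : L.BoundedFormula α n) : qr (f ⊓ g) = max (qr f) (qr g) := by
  show qr (f.imp g.not).not = _
  rw [qr_not, qr_imp, qr_not]
lemma qr_sup (f g : L.BoundedFormula α n) : qr (f ⊔ g) = max (qr f) (qr g) := by
  show qr (f.not.imp g) = _
  rw [qr_imp, qr_not]

lemma qr_alls : ∀ {k : ℕ} (φ : L.BoundedFormula α k), qr (φ.alls) = qr φ + k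
  | 0, _ => rfl
  | k+1, φ => by
    show qr (φ.all.alls) = _
    rw [qr_alls φ.all, qr_all]
    omega

/-- Conjunction of a list of bounded formulas. -/
def lconj : List (L.BoundedFormula α n) → L.BoundedFormula α n
  | [] => ⊤
  | f :: l => f ⊓ lconj l

/-- Disjunction of a list of bounded formulas. -/
def ldisj : List (L.BoundedFormula α n) → L.BoundedFormula α n
  | [] => ⊥
  | f :: l => f ⊔ ldisj l

lemma qr_lconj {m : ℕ} (l : List (L.BoundedFormula α n)) (h : ∀ f ∈ l, qr f ≤ m) :
    qr (lconj l) ≤ m := by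
  induction l with
  | nil => simp [lconj, qr_top]
  | cons f l ih =>
    simp only [lconj, qr_inf, max_le_iff]
    exact ⟨h f (by simp), ih fun g hg => h g (by simp [hg])⟩

lemma qr_ldisj {m : ℕ} (l : List (L.BoundedFormula α n)) (h : ∀ f ∈ l, qr f ≤ m) :
    qr (ldisj l) ≤ m := by
  induction l with
  | nil => simp [ldisj, qr_bot]
  | cons f l ih =>
    simp only [ldisj, qr_sup, max_le_iff]
    exact ⟨h f (by simp), ih fun g hg => h g (by simp [hg])⟩

lemma realize_lconj {M : Type*} [L.Structure M] (l : List (L.BoundedFormula α n))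
    (v : α → M) (xs : Fin n → M) :
    (lconj l).Realize v xs ↔ ∀ f ∈ l, f.Realize v xs := by
  induction l with
  | nil => simp [lconj]
  | cons f l ih => simp [lconj, ih]

lemma realize_ldisj {M : Type*} [L.Structure M] (l : List (L.BoundedFormula α n))
    (v : α → M) (xs : Fin n → M) :
    (ldisj l).Realize v xs ↔ ∃ f ∈ l, f.Realize v xs := by
  induction l with
  | nil => simp [ldisj]
  | cons f l ih => simp [ldisj, ih]

/-- Semantic equivalence (over structures in `Type u`). -/
def Eqv (f g : L.BoundedFormula α n) : Prop :=
  ∀ (M : Type u) [L.Structure M] (v : α → M) (xs : Fin n → M),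
    f.Realize v xs ↔ g.Realize v xs

/-- `φ`'s truth value is determined by the truth values of members of `T`. -/
def Det (T : List (L.BoundedFormula α n)) (φ : L.BoundedFormula α n) : Prop :=
  ∀ (M : Type u) [L.Structure M] (v : α → M) (xs : Fin n → M)
    (M' : Type u) [L.Structure M'] (v' : α → M') (xs' : Fin n → M'),
    (∀ t ∈ T, (t.Realize v xs ↔ t.Realize v' xs')) → (φ.Realize v xs ↔ φ.Realize v' xs')

open Classical in
/-- Conjunction asserting exactly the members of `u` among `T`. -/
noncomputable def conjOf (T u : List (L.BoundedFormula α n)) : L.BoundedFormula α n :=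
  lconj (T.map fun t => if t ∈ u then t else t.not)

open Classical in
/-- All boolean combinations of members of `T`. -/
noncomputable def combos (T : List (L.BoundedFormula α n)) : List (L.BoundedFormula α n) :=
  T.sublists.sublists.map fun U => ldisj (U.map (conjOf T))

lemma qr_conjOf {m : ℕ} (T u : List (L.BoundedFormula α n)) (hT : ∀ t ∈ T, qr t ≤ m) :
    qr (conjOf T u) ≤ m := by
  classical
  refine qr_lconj _ fun f hf => ?_
  obtain ⟨t, ht, rfl⟩ := List.mem_map.1 hf
  split <;> simp [qr_not, hT t ht]

lemma qr_combos {m : ℕ} (T : List (L.BoundedFormula α n)) (hT : ∀ t ∈ T, qr t ≤ m) :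
    ∀ ψ ∈ combos T, qr ψ ≤ m := by
  intro ψ hψ
  obtain ⟨U, _, rfl⟩ := List.mem_map.1 hψ
  refine qr_ldisj _ fun f hf => ?_
  obtain ⟨u, _, rfl⟩ := List.mem_map.1 hf
  exact qr_conjOf T u hT

lemma realize_conjOf {M : Type*} [L.Structure M] (T u : List (L.BoundedFormula α n))
    (v : α → M) (xs : Fin n → M) :
    (conjOf T u).Realize v xs ↔ ∀ t ∈ T, (t.Realize v xs ↔ t ∈ u) := by
  classical
  rw [conjOf, realize_lconj]
  constructor
  · intro h t ht
    have := h _ (List.mem_map.2 ⟨t, ht, rfl⟩)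
    split at this
    · simp_all
    · simp only [BoundedFormula.realize_not] at this
      simp_all
  · intro h f hf
    obtain ⟨t, ht, rfl⟩ := List.mem_map.1 hf
    by_cases h' : t ∈ u
    · rw [if_pos h']; exact (h t ht).2 h'
    · rw [if_neg h']
      simpa [BoundedFormula.realize_not] using fun hr => h' ((h t ht).1 hr)

lemma covered {T : List (L.BoundedFormula α n)} {φ : L.BoundedFormula α n}
    (hdet : Det T φ) : ∃ ψ ∈ combos T, Eqv φ ψ := by
  classical
  set P : List (L.BoundedFormula α n) → Prop := fun u =>
    ∃ (M : Type u) (_ : L.Structure M) (v : α → M) (xs : Fin n → M),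
      φ.Realize v xs ∧ ∀ t ∈ T, (t.Realize v xs ↔ t ∈ u) with hP
  set U : List (List (L.BoundedFormula α n)) :=
    T.sublists.filter fun u => decide (P u) with hU
  refine ⟨ldisj (U.map (conjOf T)), List.mem_map.2 ⟨U, ?_, rfl⟩, ?_⟩
  · exact List.mem_sublists.2 (List.filter_sublist)
  · intro M _ v xs
    rw [realize_ldisj]
    constructor
    · intro hφ
      set u : List (L.BoundedFormula α n) := T.filter fun t => decide (t.Realize v xs) with hu
      have hpat : ∀ t ∈ T, (t.Realize v xs ↔ t ∈ u) := by
        intro t ht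
        simp [hu, List.mem_filter, ht]
      refine ⟨conjOf T u, List.mem_map.2 ⟨u, ?_, rfl⟩, (realize_conjOf T u v xs).2 hpat⟩
      rw [hU, List.mem_filter]
      exact ⟨List.mem_sublists.2 (List.filter_sublist),
        decide_eq_true ⟨M, inferInstance, v, xs, hφ, hpat⟩⟩
    · rintro ⟨f, hf, hrf⟩
      obtain ⟨u, hu, rfl⟩ := List.mem_map.1 hf
      rw [hU, List.mem_filter] at hu
      obtain ⟨M', _, v', xs', hφ', hpat'⟩ := of_decide_eq_true hu.2
      have hpat := (realize_conjOf T u v xs).1 hrf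
      exact (hdet M' v' xs' M v xs fun t ht => (hpat' t ht).trans ((hpat t ht).symm)).1 hφ'

/-- Atomic formulas. -/
def IsAtom (φ : L.BoundedFormula α n) : Prop :=
  (∃ t₁ t₂, φ = BoundedFormula.equal t₁ t₂) ∨
    ∃ (k : ℕ) (r : L.Relations k) (x : Fin k → L.Term (α ⊕ Fin n)), φ = BoundedFormula.rel r x

lemma term_is_var [L.IsRelational] {β : Type*} (t : L.Term β) : ∃ b, t = Term.var b := by
  cases t with
  | var b => exact ⟨b, rfl⟩
  | func f _ => exact isEmptyElim f

lemma atoms_finite [L.IsRelational] [Finite (Σ k, L.Relations k)] (α : Type) [Finite α]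
    (n : ℕ) : {φ : L.BoundedFormula α n | IsAtom φ}.Finite := by
  classical
  set β := α ⊕ Fin n with hβ
  let F : (β × β) ⊕ (Σ p : Σ k, L.Relations k, Fin p.1 → β) → L.BoundedFormula α n :=
    Sum.elim (fun q => BoundedFormula.equal (Term.var q.1) (Term.var q.2))
      (fun q => BoundedFormula.rel q.1.2 fun i => Term.var (q.2 i))
  refine (Set.finite_range F).subset ?_
  rintro φ (⟨t₁, t₂, rfl⟩ | ⟨k, r, x, rfl⟩)
  · obtain ⟨b₁, rfl⟩ := term_is_var t₁
    obtain ⟨b₂, rfl⟩ := term_is_var t₂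
    exact ⟨Sum.inl (b₁, b₂), rfl⟩
  · choose b hb using fun i => term_is_var (x i)
    refine ⟨Sum.inr ⟨⟨k, r⟩, b⟩, ?_⟩
    simp only [F, Sum.elim_inr]
    congr 1
    exact funext fun i => (hb i).symm

lemma qr_isAtom {φ : L.BoundedFormula α n} (h : IsAtom φ) : qr φ = 0 := by
  rcases h with ⟨t₁, t₂, rfl⟩ | ⟨k, r, x, rfl⟩ <;> rfl

lemma det_of_eqv_mem {T : List (L.BoundedFormula α n)} {φ χ : L.BoundedFormula α n}
    (h : Eqv φ χ) (hχ : χ ∈ T) : Det T φ := by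
  intro M _ v xs M' _ v' xs' hpat
  rw [h M v xs, h M' v' xs']
  exact hpat χ hχ

lemma eqv_all {f g : L.BoundedFormula α (n+1)} (h : Eqv f g) : Eqv f.all g.all := by
  intro M _ v xs
  simp only [BoundedFormula.realize_all]
  exact forall_congr' fun x => h M v _

lemma det_all {α : Type*} {B : ℕ} :
    ∀ {n : ℕ} (φ : L.BoundedFormula α n) (T : List (L.BoundedFormula α n)),
      (∀ ψ, IsAtom ψ → ψ ∈ T) →
      (∀ f : L.BoundedFormula α (n+1), qr f + 1 ≤ B → ∃ χ ∈ T, Eqv f.all χ) →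
      qr φ ≤ B → Det T φ := by
  intro n φ
  induction φ with
  | falsum =>
    intro T _ _ _ M _ v xs M' _ v' xs' _
    simp [BoundedFormula.Realize]
  | equal t₁ t₂ =>
    intro T hA _ _ M _ v xs M' _ v' xs' h
    exact h _ (hA _ (Or.inl ⟨t₁, t₂, rfl⟩))
  | rel r x =>
    intro T hA _ _ M _ v xs M' _ v' xs' h
    exact h _ (hA _ (Or.inr ⟨_, r, x, rfl⟩))
  | imp f g ihf ihg =>
    intro T hA hB hq M _ v xs M' _ v' xs' h
    rw [qr_imp, max_le_iff] at hq
    simp only [BoundedFormula.realize_imp]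
    exact imp_congr (ihf T hA hB hq.1 M v xs M' v' xs' h)
      (ihg T hA hB hq.2 M v xs M' v' xs' h)
  | all f ih =>
    intro T hA hB hq
    obtain ⟨χ, hχT, hχ⟩ := hB f (by rw [qr_all] at hq; exact hq)
    exact det_of_eqv_mem hχ hχT

lemma cover [L.IsRelational] [Finite (Σ k, L.Relations k)] (α : Type) [Finite α] :
    ∀ m n : ℕ, ∃ S : List (L.BoundedFormula α n),
      (∀ ψ ∈ S, qr ψ ≤ m) ∧ ∀ φ : L.BoundedFormula α n, qr φ ≤ m → ∃ ψ ∈ S, Eqv φ ψ := by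
  intro m
  induction m with
  | zero =>
    intro n
    classical
    set T := (atoms_finite (L := L) α n).toFinset.toList with hT
    have hA : ∀ ψ : L.BoundedFormula α n, IsAtom ψ → ψ ∈ T := fun ψ hψ => by
      simp [hT, Set.Finite.mem_toFinset, hψ]
    have hTq : ∀ t ∈ T, qr t ≤ 0 := fun t ht => by
      have : IsAtom t := by simpa [hT, Set.Finite.mem_toFinset] using ht
      simp [qr_isAtom this]
    exact ⟨combos T, qr_combos T hTq,
      fun φ hφ => covered (det_all φ T hA (fun f hf => absurd hf (by omega)) hφ)⟩
  | succ m ih =>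
    intro n
    classical
    obtain ⟨S', hS'q, hS'⟩ := ih (n+1)
    set T := (atoms_finite (L := L) α n).toFinset.toList ++ S'.map BoundedFormula.all with hT
    have hA : ∀ ψ, IsAtom ψ → ψ ∈ T := fun ψ hψ =>
      List.mem_append_left _ (by simp [Set.Finite.mem_toFinset, hψ])
    have hB : ∀ f : L.BoundedFormula α (n+1), qr f + 1 ≤ m + 1 → ∃ χ ∈ T, Eqv f.all χ := by
      intro f hf
      obtain ⟨ψ, hψS, hψ⟩ := hS' f (by omega)
      exact ⟨ψ.all, List.mem_append_right _ (List.mem_map.2 ⟨ψ, hψS, rfl⟩), eqv_all hψ⟩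
    have hTq : ∀ t ∈ T, qr t ≤ m + 1 := by
      intro t ht
      rcases List.mem_append.1 ht with h | h
      · have : IsAtom t := by simpa [Set.Finite.mem_toFinset] using h
        simp [qr_isAtom this]
      · obtain ⟨ψ, hψ, rfl⟩ := List.mem_map.1 h
        rw [qr_all]
        exact Nat.succ_le_succ (hS'q ψ hψ)
    exact ⟨combos T, qr_combos T hTq, fun φ hφ => covered (det_all φ T hA hB hφ)⟩

end UPAux

open UPAux


theorem finitely_many_formulas_and_characteristic_sentence
    {L : FirstOrder.Language.{u, v}} [L.IsRelational] [Finite (Σ n, L.Relations n)]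
    (m : ℕ) :
    (∀ (α : Type) [Finite α], ∃ S : Set (L.Formula α), S.Finite ∧
      ∀ φ : L.Formula α, qr φ ≤ m → ∃ ψ ∈ S,
        ∀ (M : Type u) [L.Structure M] (v : α → M), φ.Realize v ↔ ψ.Realize v) ∧
    (∀ (M : Type u) [L.Structure M], ∃ χ : L.Sentence, qr χ = m ∧
      ∀ (N : Type u) [L.Structure N], N ⊨ χ ↔ MEquiv L m M N) := by
  constructor
  · intro α _
    obtain ⟨S, hSq, hS⟩ := cover (L := L) α m 0
    refine ⟨{ψ | ψ ∈ S}, S.finite_toSet, fun φ hφ => ?_⟩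
    obtain ⟨ψ, hψS, hψ⟩ := hS φ hφ
    exact ⟨ψ, hψS, fun M _ v => hψ M v default⟩
  · intro M _
    classical
    obtain ⟨S, hSq, hS⟩ := cover (L := L) Empty m 0
    set χ₀ : L.Sentence := lconj (S.map fun ψ => if Sentence.Realize M ψ then ψ else ψ.not) with hχ₀
    set pad : L.Sentence := BoundedFormula.alls (⊤ : L.BoundedFormula Empty m) with hpad
    have hqrpad : qr pad = m := by rw [hpad, qr_alls, qr_top]; omega
    have hqrχ₀ : qr χ₀ ≤ m := by
      rw [hχ₀]
      refine qr_lconj _ fun f hf => ?_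
      obtain ⟨ψ, hψ, rfl⟩ := List.mem_map.1 hf
      split <;> simp [qr_not, hSq ψ hψ]
    have key : ∀ (N : Type u) [L.Structure N],
        (N ⊨ (pad ⊓ χ₀ : L.Sentence)) ↔ ∀ ψ ∈ S, (M ⊨ ψ ↔ N ⊨ ψ) := by
      intro N _
      have hpadN : N ⊨ pad := by
        rw [hpad]
        show (BoundedFormula.alls (⊤ : L.BoundedFormula Empty m)).Realize
          (default : Empty → N)
        rw [BoundedFormula.realize_alls]
        intro xs
        exact BoundedFormula.realize_top.2 trivial
      have hiff : (N ⊨ (pad ⊓ χ₀ : L.Sentence)) ↔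
          ∀ f ∈ S.map fun ψ => if Sentence.Realize M ψ then ψ else ψ.not,
            BoundedFormula.Realize f (default : Empty → N) (default : Fin 0 → N) := by
        constructor
        · intro h
          have h2 : BoundedFormula.Realize (pad ⊓ χ₀) (default : Empty → N)
              (default : Fin 0 → N) := h
          rw [BoundedFormula.realize_inf] at h2
          rw [hχ₀] at h2
          exact (realize_lconj _ _ _).1 h2.2
        · intro h
          show BoundedFormula.Realize (pad ⊓ χ₀) (default : Empty → N)
            (default : Fin 0 → N)
          rw [BoundedFormula.realize_inf]
          exact ⟨hpadN, by rw [hχ₀]; exact (realize_lconj _ _ _).2 h⟩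
      rw [hiff]
      constructor
      · intro h ψ hψ
        have := h _ (List.mem_map.2 ⟨ψ, hψ, rfl⟩)
        by_cases hM : Sentence.Realize M ψ
        · rw [if_pos hM] at this
          exact iff_of_true hM this
        · rw [if_neg hM] at this
          rw [BoundedFormula.realize_not] at this
          exact iff_of_false hM this
      · intro h f hf
        obtain ⟨ψ, hψ, rfl⟩ := List.mem_map.1 hf
        by_cases hM : Sentence.Realize M ψ
        · rw [if_pos hM]
          exact (h ψ hψ).1 hM
        · rw [if_neg hM]
          rw [BoundedFormula.realize_not]
          exact fun hr => hM ((h ψ hψ).2 hr)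
    refine ⟨pad ⊓ χ₀, ?_, ?_⟩
    · rw [qr_inf, hqrpad]
      omega
    · intro N _
      rw [key N]
      constructor
      · intro h φ hφ
        obtain ⟨ψ, hψS, hψ⟩ := hS φ hφ
        have h1 : (M ⊨ φ) ↔ (M ⊨ ψ) := hψ M default default
        have h2 : (N ⊨ φ) ↔ (N ⊨ ψ) := hψ N default default
        rw [h1, h2]
        exact h ψ hψS
      · intro h ψ hψ
        exact h ψ (hSq ψ hψ)
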